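/- Let B be a strictly positive m×n integer matrix, let E be a basic elementary matrix of size m with nonzero offdiagonal entry at position (i,j), and suppose the i'th row of EB is not the zero row. Then there exist a matrix Q ∈ SL(n,ℤ) which is a product of nonnegative basic elementary matrices and a signed permutation matrix S ∈ SL(m,ℤ) such that the matrix SEBQ is strictly positive. -/

import Mathlib

/-- The matrix of a transposition of `i` and `j`, with the offdiagonal `1` at
position `(j,i)` replaced by `-1`. -/
def signedTranspoMatrix {K : ℕ} (i j : Fin K) : Matrix (Fin K) (Fin K) ℤ :=
  Matrix.of fun k l =>
    if k = i ∧ l = j then 1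
    else if k = j ∧ l = i then -1
    else if k = l ∧ k ≠ i ∧ k ≠ j then 1
    else 0

/-- A signed transposition matrix. -/
def IsSignedTransposition {K : ℕ} (S : Matrix (Fin K) (Fin K) ℤ) : Prop :=
  ∃ i j : Fin K, i ≠ j ∧ (S = signedTranspoMatrix i j ∨ S = signedTranspoMatrix j i)

/-- A signed permutation matrix: a (nonempty) product of signed transposition
matrices. -/
def IsSignedPermutation {K : ℕ} (S : Matrix (Fin K) (Fin K) ℤ) : Prop :=
  ∃ L : List (Matrix (Fin K) (Fin K) ℤ),
    L ≠ [] ∧ (∀ T ∈ L, IsSignedTransposition T) ∧ L.prod = S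

/-- A nonnegative basic elementary matrix: equal to the identity except for at
most one offdiagonal entry, which is `1`. -/
def IsNonnegBasicElementary {K : ℕ} (E : Matrix (Fin K) (Fin K) ℤ) : Prop :=
  E = 1 ∨ ∃ i j : Fin K, i ≠ j ∧ E = 1 + Matrix.single i j 1

section Helpers

lemma stdmul_left {m n : ℕ} (i j : Fin m) (c : ℤ) (B : Matrix (Fin m) (Fin n) ℤ)
    (a : Fin m) (b : Fin n) :
    (Matrix.single i j c * B) a b = if a = i then c * B j b else 0 := by
  simp [Matrix.mul_apply, Matrix.single, ite_and, eq_comm]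

lemma stdmul_right {m n : ℕ} (k l : Fin n) (c : ℤ) (M : Matrix (Fin m) (Fin n) ℤ)
    (a : Fin m) (b : Fin n) :
    (M * Matrix.single k l c) a b = if b = l then M a k * c else 0 := by
  simp [Matrix.mul_apply, Matrix.single, ite_and, eq_comm]

lemma T_eq {K : ℕ} {i j : Fin K} (hij : i ≠ j) :
    signedTranspoMatrix i j = 1 + Matrix.single i j 1 + Matrix.single j i (-1)
      + Matrix.single i i (-1) + Matrix.single j j (-1) := by
  ext k l
  by_cases h1 : k = i <;> by_cases h2 : k = j <;> by_cases h3 : l = i <;> by_cases h4 : l = j <;>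
    by_cases h5 : k = l <;>
  simp_all [signedTranspoMatrix, Matrix.one_apply, Matrix.single_apply, eq_comm]

lemma std_neg {K : ℕ} (a b : Fin K) :
    Matrix.single a b (-1 : ℤ) = -Matrix.single a b 1 := by
  ext k l
  simp [Matrix.single, apply_ite Neg.neg]

lemma T_mul_apply {K m : ℕ} {i j : Fin K} (hij : i ≠ j) (M : Matrix (Fin K) (Fin m) ℤ)
    (a : Fin K) (b : Fin m) :
    (signedTranspoMatrix i j * M) a b =
      if a = i then M j b else if a = j then -M i b else M a b := by
  rw [T_eq hij]
  simp only [Matrix.add_mul, Matrix.one_mul, Matrix.add_apply, stdmul_left]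
  by_cases h1 : a = i <;> by_cases h2 : a = j <;> simp_all

lemma T_mul_T {K : ℕ} {i j : Fin K} (hij : i ≠ j) :
    signedTranspoMatrix i j * signedTranspoMatrix j i = 1 := by
  ext a b
  rw [T_mul_apply hij]
  by_cases h1 : a = i <;> by_cases h2 : a = j <;> by_cases h3 : b = i <;> by_cases h4 : b = j <;>
    by_cases h5 : a = b <;>
  simp_all [signedTranspoMatrix, Matrix.one_apply]

lemma T_det {K : ℕ} {i j : Fin K} (hij : i ≠ j) :
    (signedTranspoMatrix i j).det = 1 := by
  have e1 : Matrix.single i j (1:ℤ) * Matrix.single j i (-1)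
      = Matrix.single i i (-1) := by
    rw [Matrix.single_mul_single_same]; norm_num
  have e2 : Matrix.single j i (-1:ℤ) * Matrix.single i j 1
      = Matrix.single j j (-1) := by
    rw [Matrix.single_mul_single_same]; norm_num
  have e3 : Matrix.single i j (1:ℤ) * Matrix.single i j 1 = 0 :=
    Matrix.single_mul_single_of_ne _ _ _ _ hij.symm _
  have e4 : Matrix.single i i (-1:ℤ) * Matrix.single i j 1
      = Matrix.single i j (-1) := by
    rw [Matrix.single_mul_single_same]; norm_num
  have e5 : Matrix.single i j (1:ℤ) * Matrix.single j j (-1)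
      = Matrix.single i j (-1) := by
    rw [Matrix.single_mul_single_same]; norm_num
  have h : signedTranspoMatrix i j =
      Matrix.transvection i j (1:ℤ) * Matrix.transvection j i (-1) * Matrix.transvection i j 1 := by
    rw [T_eq hij]
    simp only [Matrix.transvection, add_mul, mul_add, one_mul, mul_one, mul_assoc]
    simp only [e1, e2, e3, e4, e5, mul_zero, zero_mul]
    simp only [std_neg]
    abel
  rw [h, Matrix.det_mul, Matrix.det_mul, Matrix.det_transvection_of_ne _ _ hij,
    Matrix.det_transvection_of_ne _ _ hij.symm]
  ring

lemma std_pow {n : ℕ} {b0 b : Fin n} (h : b ≠ b0) (N : ℕ) :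
    (1 + Matrix.single b0 b (1:ℤ)) ^ N = 1 + Matrix.single b0 b (N:ℤ) := by
  induction N with
  | zero => simp
  | succ N ih =>
    rw [pow_succ, ih]
    have h0 : Matrix.single b0 b ((N:ℤ)) * Matrix.single b0 b (1:ℤ) = 0 :=
      Matrix.single_mul_single_of_ne _ _ _ _ h _
    have hadd : Matrix.single b0 b ((N:ℤ) + 1)
        = Matrix.single b0 b (N:ℤ) + Matrix.single b0 b 1 :=
      Matrix.single_add _ _ _ _
    push_cast
    rw [hadd]
    simp only [mul_add, add_mul, one_mul, mul_one, h0]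
    abel

lemma prodQ {n : ℕ} (b0 : Fin n) (N : ℕ) (s : Finset (Fin n)) (hs : b0 ∉ s) :
    ∃ L : List (Matrix (Fin n) (Fin n) ℤ), (∀ X ∈ L, IsNonnegBasicElementary X) ∧
      L.prod = 1 + ∑ b ∈ s, Matrix.single b0 b (N:ℤ) := by
  induction s using Finset.induction_on with
  | empty => exact ⟨[], by simp, by simp⟩
  | @insert a s ha ih =>
    have hb0a : b0 ≠ a := fun h => hs (h ▸ Finset.mem_insert_self a s)
    have hb0s : b0 ∉ s := fun h => hs (Finset.mem_insert_of_mem h)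
    obtain ⟨L, hL, hLp⟩ := ih hb0s
    refine ⟨L ++ List.replicate N (1 + Matrix.single b0 a 1), ?_, ?_⟩
    · intro X hX
      rcases List.mem_append.1 hX with hX | hX
      · exact hL X hX
      · rw [List.eq_of_mem_replicate hX]
        exact Or.inr ⟨b0, a, hb0a, rfl⟩
    · rw [List.prod_append, List.prod_replicate, hLp, std_pow (Ne.symm hb0a)]
      rw [Finset.sum_insert ha]
      have hz : (∑ b ∈ s, Matrix.single b0 b (N:ℤ)) * Matrix.single b0 a (N:ℤ)
          = 0 := by
        rw [Finset.sum_mul]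
        refine Finset.sum_eq_zero fun b hb => ?_
        exact Matrix.single_mul_single_of_ne _ _ _ _ (fun h => hb0s (by rw [← h]; exact hb)) _
      simp only [mul_add, add_mul, one_mul, mul_one, hz]
      abel

lemma det_list {n : ℕ} (L : List (Matrix (Fin n) (Fin n) ℤ))
    (h : ∀ X ∈ L, IsNonnegBasicElementary X) : L.prod.det = 1 := by
  induction L with
  | nil => simp
  | cons X L ih =>
    rw [List.prod_cons, Matrix.det_mul, ih (fun Y hY => h Y (List.mem_cons_of_mem _ hY))]
    rcases h X (List.mem_cons_self) with h1 | ⟨i, j, hij, h1⟩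
    · rw [h1, Matrix.det_one]; ring
    · rw [h1, show (1 : Matrix (Fin n) (Fin n) ℤ) + Matrix.single i j 1
          = Matrix.transvection i j 1 from rfl, Matrix.det_transvection_of_ne _ _ hij]
      ring

lemma col_fix {m n : ℕ} (M : Matrix (Fin m) (Fin n) ℤ) (r : Fin m) (b0 : Fin n)
    (hb0 : 0 < M r b0) (hpos : ∀ a, a ≠ r → ∀ b, 0 < M a b) :
    ∃ Q : Matrix (Fin n) (Fin n) ℤ,
      (∃ L : List (Matrix (Fin n) (Fin n) ℤ),
        (∀ X ∈ L, IsNonnegBasicElementary X) ∧ L.prod = Q) ∧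
      Q.det = 1 ∧ ∀ a b, 0 < (M * Q) a b := by
  set N : ℕ := (Finset.univ.sum fun b => (M r b).natAbs) + 1 with hN
  set s : Finset (Fin n) := Finset.univ.erase b0 with hs
  have hb0s : b0 ∉ s := Finset.notMem_erase _ _
  obtain ⟨L, hL, hLp⟩ := prodQ b0 N s hb0s
  set Q : Matrix (Fin n) (Fin n) ℤ := 1 + ∑ b ∈ s, Matrix.single b0 b (N:ℤ) with hQ
  have hdet : Q.det = 1 := by rw [← hLp]; exact det_list L hL
  refine ⟨Q, ⟨L, hL, hLp⟩, hdet, ?_⟩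
  intro a b
  have hMQ : (M * Q) a b = M a b + if b ∈ s then M a b0 * (N:ℤ) else 0 := by
    rw [hQ, Matrix.mul_add, Matrix.mul_one, Matrix.mul_sum, Matrix.add_apply, Matrix.sum_apply]
    congr 1
    rw [show (∑ b' ∈ s, (M * Matrix.single b0 b' (N:ℤ)) a b)
        = ∑ b' ∈ s, if b = b' then M a b0 * (N:ℤ) else 0 from
      Finset.sum_congr rfl fun b' _ => stdmul_right b0 b' _ M a b]
    exact Finset.sum_ite_eq s b fun _ => M a b0 * (N:ℤ)
  rw [hMQ]
  by_cases hb : b ∈ s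
  · rw [if_pos hb]
    by_cases ha : a = r
    · rw [ha]
      have h1 : (M r b).natAbs ≤ Finset.univ.sum fun b' => (M r b').natAbs :=
        Finset.single_le_sum (f := fun b' => (M r b').natAbs)
          (fun _ _ => Nat.zero_le _) (Finset.mem_univ b)
      have hmul : (N:ℤ) ≤ M r b0 * N :=
        le_mul_of_one_le_left (by positivity) hb0
      omega
    · have h1 := hpos a ha b
      have h2 := hpos a ha b0
      have : 0 < M a b0 * (N:ℤ) := by positivity
      omega
  · rw [if_neg hb]
    have hbb0 : b = b0 := by
      by_contra hne
      exact hb (Finset.mem_erase.2 ⟨hne, Finset.mem_univ b⟩)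
    subst hbb0
    simp only [add_zero]
    by_cases ha : a = r
    · rw [ha]; exact hb0
    · exact hpos a ha b

end Helpers

/-- If `B` is strictly positive, `E` is a basic elementary matrix with nonzero
offdiagonal entry at `(i,j)`, and the `i`'th row of `EB` is nonzero, then there
are `Q ∈ SL(n,ℤ)` a product of nonnegative basic elementary matrices and a
signed permutation matrix `S ∈ SL(m,ℤ)` with `SEBQ` strictly positive. -/
theorem stmt_8 (m n : ℕ) (B : Matrix (Fin m) (Fin n) ℤ)
    (hB : ∀ (a : Fin m) (b : Fin n), 0 < B a b)
    (i j : Fin m) (hij : i ≠ j) (c : ℤ) (hc : c = 1 ∨ c = -1)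
    (E : Matrix (Fin m) (Fin m) ℤ) (hE : E = 1 + Matrix.single i j c)
    (hrow : ∃ b : Fin n, (E * B) i b ≠ 0) :
    ∃ (Q : Matrix (Fin n) (Fin n) ℤ) (S : Matrix (Fin m) (Fin m) ℤ),
      (∃ L : List (Matrix (Fin n) (Fin n) ℤ),
        (∀ M ∈ L, IsNonnegBasicElementary M) ∧ L.prod = Q) ∧
      Q.det = 1 ∧ IsSignedPermutation S ∧ S.det = 1 ∧
      ∀ (a : Fin m) (b : Fin n), 0 < (S * E * B * Q) a b := by
  have hEB : ∀ (a : Fin m) (b : Fin n), (E * B) a b = B a b + if a = i then c * B j b else 0 := by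
    intro a b
    rw [hE, Matrix.add_mul, Matrix.one_mul, Matrix.add_apply, stdmul_left]
  obtain ⟨b0, hb0⟩ := hrow
  rcases hb0.lt_or_gt with hneg | hpos
  · -- row i has a negative entry at b0 : use S = signedTranspoMatrix i j
    set T := signedTranspoMatrix i j with hT
    have hMpos : ∀ a, a ≠ j → ∀ b, 0 < (T * (E * B)) a b := by
      intro a ha b
      rw [T_mul_apply hij]
      rcases eq_or_ne a i with rfl | hai
      · rw [if_pos rfl, hEB, if_neg (Ne.symm hij)]
        simpa using hB j b
      · rw [if_neg hai, if_neg ha, hEB, if_neg hai]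
        simpa using hB a b
    have hMb0 : 0 < (T * (E * B)) j b0 := by
      rw [T_mul_apply hij, if_neg (Ne.symm hij), if_pos rfl]
      omega
    obtain ⟨Q, hQL, hQdet, hQpos⟩ := col_fix (T * (E * B)) j b0 hMb0 hMpos
    refine ⟨Q, T, hQL, hQdet, ⟨[T], by simp, ?_, by simp⟩, T_det hij, ?_⟩
    · intro X hX
      rw [List.mem_singleton.1 hX]
      exact ⟨i, j, hij, Or.inl rfl⟩
    · intro a b
      rw [Matrix.mul_assoc T E B]
      exact hQpos a b
  · -- row i has a positive entry at b0 : use S = T * T' = 1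
    have hMpos : ∀ a, a ≠ i → ∀ b, 0 < (E * B) a b := by
      intro a ha b
      rw [hEB, if_neg ha]
      simpa using hB a b
    obtain ⟨Q, hQL, hQdet, hQpos⟩ := col_fix (E * B) i b0 hpos hMpos
    refine ⟨Q, signedTranspoMatrix i j * signedTranspoMatrix j i, hQL, hQdet,
      ⟨[signedTranspoMatrix i j, signedTranspoMatrix j i], by simp, ?_, by simp⟩, ?_, ?_⟩
    · intro X hX
      rcases List.mem_cons.1 hX with rfl | hX
      · exact ⟨i, j, hij, Or.inl rfl⟩
      · rw [List.mem_singleton.1 hX]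
        exact ⟨i, j, hij, Or.inr rfl⟩
    · rw [T_mul_T hij, Matrix.det_one]
    · intro a b
      rw [T_mul_T hij, Matrix.one_mul, Matrix.mul_assoc]
      have := hQpos a b
      rwa [Matrix.mul_assoc] at this
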